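/- If \(B\) is an odd \(T\)-walk barrier in network \((G, T, cap)\) and \(\mathcal{P} = \{\alpha_1 \cdot W_1, \dots, \alpha_m \cdot W_m\}\) is any fractional packing of odd \(T\)-walks, then \(\sum_i \alpha_i \leq \frac{1}{2} cap(I(B)) + cap(U(B))\). (Weak duality for odd \(T\)-walk packing.) -/

import Mathlib

open scoped Classical

private noncomputable def cnt {α : Type*} (P : α → Prop) (l : List α) : ℕ :=
  l.countP (fun e => @decide (P e) (Classical.propDecidable _))

private lemma countP_eq_sum {α : Type*} [DecidableEq α] (P : α → Prop) [DecidablePred P] (s : Finset α) :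
    ∀ l : List α, (∀ e ∈ l, e ∈ s) →
      cnt P l = ∑ e ∈ s, if P e then l.count e else 0 := by
  intro l
  induction l with
  | nil => simp [cnt]
  | cons a l ih =>
    intro h
    have ha : a ∈ s := h a (by simp)
    have hl : ∀ e ∈ l, e ∈ s := fun e he => h e (by simp [he])
    rw [cnt, List.countP_cons, ← cnt, ih hl]
    have hc : ∀ e ∈ s, (if P e then (a :: l).count e else 0)
        = (if P e then l.count e else 0) + (if e = a then (if P e then 1 else 0) else 0) := by
      intro e _
      by_cases hea : e = a
      · subst hea; by_cases hpe : P e <;> simp [hpe, List.count_cons]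
      · by_cases hpe : P e <;> simp [hpe, hea, Ne.symm hea, List.count_cons]
    rw [Finset.sum_congr rfl hc, Finset.sum_add_distrib, Finset.sum_ite_eq' s a]
    simp only [ha, if_true]
    by_cases hpa : P a <;> simp [hpa]

private lemma cross_iff {V : Type*} {G : SimpleGraph V} (B : G.Subgraph) (u v : V) :
    (∃ a b, s(u, v) = s(a, b) ∧ a ∈ B.verts ∧ b ∉ B.verts) ↔
      ¬(u ∈ B.verts ↔ v ∈ B.verts) := by
  constructor
  · rintro ⟨a, b, he, ha, hb⟩
    rw [Sym2.eq_iff] at he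
    rcases he with ⟨rfl, rfl⟩ | ⟨rfl, rfl⟩ <;> tauto
  · intro h
    by_cases hu : u ∈ B.verts
    · exact ⟨u, v, rfl, hu, fun hv => h ⟨fun _ => hv, fun _ => hu⟩⟩
    · have hv : v ∈ B.verts := by tauto
      exact ⟨v, u, Sym2.eq_swap, hv, hu⟩

private lemma cross_parity {V : Type*} {G : SimpleGraph V} (B : G.Subgraph) :
    ∀ {a b : V} (w : G.Walk a b),
      (Even (cnt (fun e => ∃ u v, e = s(u, v) ∧ u ∈ B.verts ∧ v ∉ B.verts) w.edges)
        ↔ (a ∈ B.verts ↔ b ∈ B.verts)) := by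
  intro a b w
  induction w with
  | nil => simp [cnt]
  | @cons a c b h p ih =>
    rw [cnt, SimpleGraph.Walk.edges_cons, List.countP_cons, ← cnt]
    rw [Nat.even_add]
    have h1 : (Even (if (@decide (∃ u v, s(a, c) = s(u, v) ∧ u ∈ B.verts ∧ v ∉ B.verts)
          (Classical.propDecidable _)) = true then 1 else 0))
        ↔ (a ∈ B.verts ↔ c ∈ B.verts) := by
      by_cases hcr : ∃ u v, s(a, c) = s(u, v) ∧ u ∈ B.verts ∧ v ∉ B.verts
      · have h2 := (cross_iff B a c).mp hcr
        rw [if_pos (by simpa using hcr)]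
        exact ⟨fun h => absurd h (by decide), fun h => absurd h h2⟩
      · rw [if_neg (by simpa using hcr)]
        have h2 : (a ∈ B.verts ↔ c ∈ B.verts) := by
          by_contra hc; exact hcr ((cross_iff B a c).mpr hc)
        exact ⟨fun _ => h2, fun _ => ⟨0, rfl⟩⟩
    rw [ih, h1]
    tauto

private lemma lift_walk {V : Type*} {G : SimpleGraph V} (B : G.Subgraph) :
    ∀ {a b : V} (w : G.Walk a b) (ha : a ∈ B.verts),
      (∀ e ∈ w.edges,
        ¬(∃ u v, e = s(u, v) ∧ u ∈ B.verts ∧ v ∉ B.verts) ∧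
        ¬(e ∉ B.edgeSet ∧ ∀ u v, e = s(u, v) → u ∈ B.verts ∧ v ∈ B.verts)) →
      ∃ (hb : b ∈ B.verts) (w' : B.coe.Walk ⟨a, ha⟩ ⟨b, hb⟩), w'.length = w.length := by
  intro a b w
  induction w with
  | nil => exact fun ha _ => ⟨ha, .nil, rfl⟩
  | @cons a c b h p ih =>
    intro ha hyp
    have he := hyp s(a, c) (by simp)
    have hc : c ∈ B.verts := by
      by_contra hc
      exact he.1 ⟨a, c, rfl, ha, hc⟩
    have heB : s(a, c) ∈ B.edgeSet := by
      by_contra heB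
      exact he.2 ⟨heB, fun u v huv => by
        rw [Sym2.eq_iff] at huv
        rcases huv with ⟨rfl, rfl⟩ | ⟨rfl, rfl⟩ <;> exact ⟨by assumption, by assumption⟩⟩
    have hadj : B.coe.Adj ⟨a, ha⟩ ⟨c, hc⟩ := by
      rw [SimpleGraph.Subgraph.coe_adj]
      exact SimpleGraph.Subgraph.mem_edgeSet.mp heB
    obtain ⟨hb, w', hw'⟩ := ih hc (fun e hep => hyp e (by simp [hep]))
    exact ⟨hb, .cons hadj w', by simp [hw']⟩

private lemma key_lemma {V : Type*} {G : SimpleGraph V} (B : G.Subgraph) {T : Set V}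
    (hTB : T ⊆ B.verts)
    (hbar : ∀ (x y : B.verts), (x : V) ∈ T → (y : V) ∈ T → (x : V) ≠ (y : V) →
      ∀ w : B.coe.Walk x y, ¬ Odd w.length)
    {a b : V} (ha : a ∈ T) (hb : b ∈ T) (hab : a ≠ b)
    (w : G.Walk a b) (hodd : Odd w.length) :
    2 ≤ cnt (fun e => ∃ u v, e = s(u, v) ∧ u ∈ B.verts ∧ v ∉ B.verts) w.edges
      + 2 * cnt (fun e => e ∉ B.edgeSet ∧ ∀ u v, e = s(u, v) → u ∈ B.verts ∧ v ∈ B.verts)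
          w.edges := by
  by_contra hlt
  push_neg at hlt
  have hEven : Even (cnt (fun e => ∃ u v, e = s(u, v) ∧ u ∈ B.verts ∧ v ∉ B.verts) w.edges) :=
    (cross_parity B w).mpr (iff_of_true (hTB ha) (hTB hb))
  have hnI : cnt (fun e => ∃ u v, e = s(u, v) ∧ u ∈ B.verts ∧ v ∉ B.verts) w.edges = 0 := by
    rcases hEven with ⟨k, hk⟩; omega
  have hnU : cnt (fun e => e ∉ B.edgeSet ∧ ∀ u v, e = s(u, v) → u ∈ B.verts ∧ v ∈ B.verts)
      w.edges = 0 := by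
    omega
  rw [cnt] at hnI hnU
  have hall : ∀ e ∈ w.edges,
      ¬(∃ u v, e = s(u, v) ∧ u ∈ B.verts ∧ v ∉ B.verts) ∧
      ¬(e ∉ B.edgeSet ∧ ∀ u v, e = s(u, v) → u ∈ B.verts ∧ v ∈ B.verts) := by
    intro e he
    have h1 := List.countP_eq_zero.mp hnI e he
    have h2 := List.countP_eq_zero.mp hnU e he
    simp only [decide_eq_true_iff] at h1 h2
    exact ⟨h1, h2⟩
  obtain ⟨hbv, w', hw'⟩ := lift_walk B w (hTB ha) hall
  exact hbar ⟨a, hTB ha⟩ ⟨b, hTB hb⟩ ha hb hab w' (by rw [hw']; exact hodd)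

/-- Weak duality: the value of any fractional packing of odd `T`-walks is at most the
capacity `½ cap(I(B)) + cap(U(B))` of any odd `T`-walk barrier `B`. -/
theorem stmt3 {V : Type*} [Fintype V] [DecidableEq V]
    (G : SimpleGraph V) (T : Set V) (cap : Sym2 V → ℝ) (hcap : ∀ e, 0 ≤ cap e)
    -- `B` is an odd `T`-walk barrier:
    (B : G.Subgraph) (hTB : T ⊆ B.verts)
    (hbar : ∀ (x y : B.verts), (x : V) ∈ T → (y : V) ∈ T → (x : V) ≠ (y : V) →
      ∀ w : B.coe.Walk x y, ¬ Odd w.length)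
    -- a fractional packing of odd `T`-walks:
    (m : ℕ) (α : Fin m → ℝ) (hα : ∀ i, 0 ≤ α i)
    (x y : Fin m → V) (W : ∀ i, G.Walk (x i) (y i))
    (hterm : ∀ i, x i ∈ T ∧ y i ∈ T ∧ x i ≠ y i)
    (hodd : ∀ i, Odd (W i).length)
    (hpack : ∀ e ∈ G.edgeSet, ∑ i, α i * ((W i).edges.count e : ℝ) ≤ cap e) :
    ∑ i, α i ≤
      (1 / 2) * (∑ e ∈ G.edgeFinset,
          if ∃ u v, e = s(u, v) ∧ u ∈ B.verts ∧ v ∉ B.verts then cap e else 0)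
      + (∑ e ∈ G.edgeFinset,
          if e ∉ B.edgeSet ∧ ∀ u v, e = s(u, v) → u ∈ B.verts ∧ v ∈ B.verts
          then cap e else 0) := by
  set P1 : Sym2 V → Prop := fun e => ∃ u v, e = s(u, v) ∧ u ∈ B.verts ∧ v ∉ B.verts with hP1
  set P2 : Sym2 V → Prop :=
    fun e => e ∉ B.edgeSet ∧ ∀ u v, e = s(u, v) → u ∈ B.verts ∧ v ∈ B.verts with hP2
  have hsub : ∀ i, ∀ e ∈ (W i).edges, e ∈ G.edgeFinset := by
    intro i e he
    rw [SimpleGraph.mem_edgeFinset]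
    exact (W i).edges_subset_edgeSet he
  -- per-walk bound
  have hkey : ∀ i, (1 : ℝ) ≤
      (1 / 2) * (∑ e ∈ G.edgeFinset, if P1 e then ((W i).edges.count e : ℝ) else 0)
      + (∑ e ∈ G.edgeFinset, if P2 e then ((W i).edges.count e : ℝ) else 0) := by
    intro i
    obtain ⟨hx, hy, hxy⟩ := hterm i
    have h2 := key_lemma B hTB hbar hx hy hxy (W i) (hodd i)
    rw [show (fun e => ∃ u v, e = s(u, v) ∧ u ∈ B.verts ∧ v ∉ B.verts) = P1 from rfl,
        show (fun e => e ∉ B.edgeSet ∧ ∀ u v, e = s(u, v) → u ∈ B.verts ∧ v ∈ B.verts) = P2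
          from rfl,
        countP_eq_sum P1 G.edgeFinset _ (hsub i),
        countP_eq_sum P2 G.edgeFinset _ (hsub i)] at h2
    have h3 := (Nat.cast_le (α := ℝ)).mpr h2
    push_cast at h3
    linarith
  -- bounding the per-predicate sums by capacities
  have hbound : ∀ (P : Sym2 V → Prop) [DecidablePred P],
      ∑ i, α i * (∑ e ∈ G.edgeFinset, if P e then ((W i).edges.count e : ℝ) else 0)
        ≤ ∑ e ∈ G.edgeFinset, if P e then cap e else 0 := by
    intro P _
    have hswap : ∑ i, α i * (∑ e ∈ G.edgeFinset, if P e then ((W i).edges.count e : ℝ) else 0)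
        = ∑ e ∈ G.edgeFinset, ∑ i, if P e then α i * ((W i).edges.count e : ℝ) else 0 := by
      simp only [Finset.mul_sum, mul_ite, mul_zero]
      exact Finset.sum_comm
    rw [hswap]
    refine Finset.sum_le_sum fun e he => ?_
    by_cases hP : P e
    · simp only [hP, if_true]
      exact hpack e (SimpleGraph.mem_edgeFinset.mp he)
    · simp [hP]
  calc ∑ i, α i
      ≤ ∑ i, α i * ((1 / 2) * (∑ e ∈ G.edgeFinset, if P1 e then ((W i).edges.count e : ℝ) else 0)
          + (∑ e ∈ G.edgeFinset, if P2 e then ((W i).edges.count e : ℝ) else 0)) := by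
        refine Finset.sum_le_sum fun i _ => ?_
        calc α i = α i * 1 := (mul_one _).symm
        _ ≤ _ := mul_le_mul_of_nonneg_left (hkey i) (hα i)
    _ = (1 / 2) * ∑ i, α i * (∑ e ∈ G.edgeFinset, if P1 e then ((W i).edges.count e : ℝ) else 0)
          + ∑ i, α i * (∑ e ∈ G.edgeFinset, if P2 e then ((W i).edges.count e : ℝ) else 0) := by
        rw [Finset.mul_sum, ← Finset.sum_add_distrib]
        exact Finset.sum_congr rfl fun i _ => by ring
    _ ≤ _ := by
        refine le_trans (add_le_add
          (mul_le_mul_of_nonneg_left (hbound P1) (by norm_num : (0:ℝ) ≤ 1 / 2))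
          (hbound P2)) (le_of_eq ?_)
        have hite : ∀ (p : Prop) (h1 h2 : Decidable p) (a b : ℝ),
            @ite ℝ p h1 a b = @ite ℝ p h2 a b := by
          intro p h1 h2 a b; rw [Subsingleton.elim h1 h2]
        have e1 : ∑ e ∈ G.edgeFinset, (if P1 e then cap e else 0)
            = ∑ e ∈ G.edgeFinset,
              (if ∃ u v, e = s(u, v) ∧ u ∈ B.verts ∧ v ∉ B.verts then cap e else 0) :=
          Finset.sum_congr rfl fun e _ => hite _ _ _ _ _
        have e2 : ∑ e ∈ G.edgeFinset, (if P2 e then cap e else 0)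
            = ∑ e ∈ G.edgeFinset,
              (if e ∉ B.edgeSet ∧ ∀ u v, e = s(u, v) → u ∈ B.verts ∧ v ∈ B.verts
                then cap e else 0) :=
          Finset.sum_congr rfl fun e _ => hite _ _ _ _ _
        rw [e1, e2]
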